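/- For n ≥ 2, g(n) ≥ ⌈((n-1)² + 1)/2⌉. -/

import Mathlib

open Finset

/-- Edge set of the complete bipartite graph with parts `A` and `B`. -/
def bicliqueEdges {V : Type*} (A B : Finset V) : Set (Sym2 V) :=
  {e | ∃ a ∈ A, ∃ b ∈ B, e = s(a, b)}

/-- `f_2(G)`: minimum number of complete bipartite subgraphs needed to partition
the edge set of the graph `G`. -/
noncomputable def f2 {V : Type*} (G : SimpleGraph V) : ℕ :=
  sInf {m | ∃ A B : Fin m → Finset V,
    (∀ k, Disjoint (A k) (B k)) ∧
    (∀ k, bicliqueEdges (A k) (B k) ⊆ G.edgeSet) ∧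
    ∀ e ∈ G.edgeSet, ∃! k, e ∈ bicliqueEdges (A k) (B k)}

/-- Edge set of the complete `r`-partite `r`-uniform hypergraph with parts `P`. -/
def crossEdges {V : Type*} [DecidableEq V] {r : ℕ} (P : Fin r → Finset V) : Set (Finset V) :=
  {e | ∃ f : Fin r → V, (∀ i, f i ∈ P i) ∧ e = Finset.image f Finset.univ}

/-- `f_r(n)`: minimum number of complete `r`-partite `r`-uniform hypergraphs needed to
partition the edge set of the complete `r`-uniform hypergraph on `n` vertices. -/
noncomputable def fr (r n : ℕ) : ℕ :=
  sInf {m | ∃ P : Fin m → Fin r → Finset (Fin n),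
    (∀ k, Pairwise (Function.onFun Disjoint (P k))) ∧
    ∀ e : Finset (Fin n), e.card = r → ∃! k, e ∈ crossEdges (P k)}

/-- `g(G,H)`: minimum number of blocks (products of edge sets of complete
bipartite subgraphs of `G` and `H` respectively) needed to partition `E(G) × E(H)`. -/
noncomputable def gGH {V W : Type*} (G : SimpleGraph V) (H : SimpleGraph W) : ℕ :=
  sInf {m | ∃ A B : Fin m → Finset V, ∃ C D : Fin m → Finset W,
    (∀ k, Disjoint (A k) (B k)) ∧ (∀ k, Disjoint (C k) (D k)) ∧
    (∀ k, bicliqueEdges (A k) (B k) ⊆ G.edgeSet) ∧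
    (∀ k, bicliqueEdges (C k) (D k) ⊆ H.edgeSet) ∧
    ∀ p : Sym2 V × Sym2 W, p.1 ∈ G.edgeSet → p.2 ∈ H.edgeSet →
      ∃! k, p.1 ∈ bicliqueEdges (A k) (B k) ∧ p.2 ∈ bicliqueEdges (C k) (D k)}

/-- `g(n) = g(K_n, K_n)`. -/
noncomputable def gn (n : ℕ) : ℕ :=
  gGH (SimpleGraph.completeGraph (Fin n)) (SimpleGraph.completeGraph (Fin n))

/-- helper lemmas -/
lemma cond_mem_of {α : Type*} {SA SB : Finset α} [DecidableEq α] (hd : Disjoint SA SB) {u1 u2 : α}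
    (h : (u1 ∈ SA ∧ u2 ∈ SB) ∨ (u1 ∈ SB ∧ u2 ∈ SA)) :
    u1 ∈ cond (decide (u1 ∈ SA)) SA SB ∧ u2 ∈ cond (decide (u1 ∈ SA)) SB SA := by
  rcases h with ⟨h1, h2⟩ | ⟨h1, h2⟩
  · simp [h1, h2]
  · have hna : u1 ∉ SA := fun hh => Finset.disjoint_left.1 hd hh h1
    simp [hna, h1, h2]

lemma cond_eq_of {α : Type*} {SA SB : Finset α} [DecidableEq α] (hd : Disjoint SA SB) {u1 : α}
    {b : Bool} (h : u1 ∈ cond b SA SB) : b = decide (u1 ∈ SA) := by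
  cases b
  · have : u1 ∉ SA := fun hh => Finset.disjoint_left.1 hd hh (by simpa using h)
    simp [this]
  · simp only [cond] at h
    simp [h]

/-- the coverage sets -/
def cov {n m : ℕ} (A B C D : Fin m → Finset (Fin n)) (i : Fin m × Bool × Bool) :
    Finset ((Fin n × Fin n) × (Fin n × Fin n)) :=
  ((cond i.2.1 (A i.1) (B i.1)) ×ˢ (cond i.2.2 (C i.1) (D i.1))) ×ˢ
  ((cond i.2.1 (B i.1) (A i.1)) ×ˢ (cond i.2.2 (D i.1) (C i.1)))

lemma mem_cov {n m : ℕ} (A B C D : Fin m → Finset (Fin n)) (i : Fin m × Bool × Bool)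
    (pq : (Fin n × Fin n) × (Fin n × Fin n)) :
    pq ∈ cov A B C D i ↔
      (pq.1.1 ∈ cond i.2.1 (A i.1) (B i.1) ∧ pq.1.2 ∈ cond i.2.2 (C i.1) (D i.1)) ∧
      (pq.2.1 ∈ cond i.2.1 (B i.1) (A i.1) ∧ pq.2.2 ∈ cond i.2.2 (D i.1) (C i.1)) := by
  simp [cov, Finset.mem_product]

lemma pointwise_cov {n m : ℕ} (A B C D : Fin m → Finset (Fin n))
    (hAB : ∀ k, Disjoint (A k) (B k)) (hCD : ∀ k, Disjoint (C k) (D k))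
    (huniq : ∀ p : Sym2 (Fin n) × Sym2 (Fin n),
      p.1 ∈ (SimpleGraph.completeGraph (Fin n)).edgeSet → p.2 ∈ (SimpleGraph.completeGraph (Fin n)).edgeSet →
      ∃! k, p.1 ∈ bicliqueEdges (A k) (B k) ∧ p.2 ∈ bicliqueEdges (C k) (D k))
    (x : Fin n × Fin n → ℚ) (pq : (Fin n × Fin n) × (Fin n × Fin n)) :
    (if pq.1.1 ≠ pq.2.1 ∧ pq.1.2 ≠ pq.2.2 then x pq.1 * x pq.2 else 0)
      = ∑ i : Fin m × Bool × Bool, if pq ∈ cov A B C D i then x pq.1 * x pq.2 else 0 := by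
  obtain ⟨⟨u1, v1⟩, u2, v2⟩ := pq
  dsimp only
  by_cases hc : u1 ≠ u2 ∧ v1 ≠ v2
  · obtain ⟨hu, hv⟩ := hc
    have he : s(u1, u2) ∈ (SimpleGraph.completeGraph (Fin n)).edgeSet := by
      simpa [SimpleGraph.completeGraph] using hu
    have hf : s(v1, v2) ∈ (SimpleGraph.completeGraph (Fin n)).edgeSet := by
      simpa [SimpleGraph.completeGraph] using hv
    obtain ⟨k₀, ⟨heA, heC⟩, hk₀⟩ := huniq (s(u1, u2), s(v1, v2)) he hf
    obtain ⟨a, ha, b, hb, heq⟩ := heA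
    rw [Sym2.eq_iff] at heq
    have hA2 : (u1 ∈ A k₀ ∧ u2 ∈ B k₀) ∨ (u1 ∈ B k₀ ∧ u2 ∈ A k₀) := by
      rcases heq with ⟨rfl, rfl⟩ | ⟨rfl, rfl⟩
      · exact Or.inl ⟨ha, hb⟩
      · exact Or.inr ⟨hb, ha⟩
    obtain ⟨c, hcc, d, hd, heq2⟩ := heC
    rw [Sym2.eq_iff] at heq2
    have hC2 : (v1 ∈ C k₀ ∧ v2 ∈ D k₀) ∨ (v1 ∈ D k₀ ∧ v2 ∈ C k₀) := by
      rcases heq2 with ⟨rfl, rfl⟩ | ⟨rfl, rfl⟩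
      · exact Or.inl ⟨hcc, hd⟩
      · exact Or.inr ⟨hd, hcc⟩
    set i₀ : Fin m × Bool × Bool := (k₀, decide (u1 ∈ A k₀), decide (v1 ∈ C k₀)) with hi₀
    have hmemK : ((u1, v1), (u2, v2)) ∈ cov A B C D i₀ := by
      rw [mem_cov]
      obtain ⟨p1, p2⟩ := cond_mem_of (hAB k₀) hA2
      obtain ⟨q1, q2⟩ := cond_mem_of (hCD k₀) hC2
      exact ⟨⟨p1, q1⟩, ⟨p2, q2⟩⟩
    have huniq2 : ∀ i : Fin m × Bool × Bool,
        ((u1, v1), (u2, v2)) ∈ cov A B C D i → i = i₀ := by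
      rintro ⟨k, b1, b2⟩ hmem
      rw [mem_cov] at hmem
      obtain ⟨⟨m1, m2⟩, m3, m4⟩ := hmem
      have hbe : s(u1, u2) ∈ bicliqueEdges (A k) (B k) := by
        cases b1 <;> simp only [cond] at m1 m3
        · exact ⟨u2, m3, u1, m1, Sym2.eq_swap⟩
        · exact ⟨u1, m1, u2, m3, rfl⟩
      have hbf : s(v1, v2) ∈ bicliqueEdges (C k) (D k) := by
        cases b2 <;> simp only [cond] at m2 m4
        · exact ⟨v2, m4, v1, m2, Sym2.eq_swap⟩
        · exact ⟨v1, m2, v2, m4, rfl⟩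
      have hk : k = k₀ := hk₀ k ⟨hbe, hbf⟩
      subst hk
      have hb1 : b1 = decide (u1 ∈ A k) := cond_eq_of (hAB k) m1
      have hb2 : b2 = decide (v1 ∈ C k) := cond_eq_of (hCD k) m2
      rw [hi₀, hb1, hb2]
    have hz : ∀ i ∈ (Finset.univ : Finset (Fin m × Bool × Bool)), i ≠ i₀ →
        (if ((u1, v1), (u2, v2)) ∈ cov A B C D i then x (u1, v1) * x (u2, v2) else 0) = 0 := by
      intro i _ hne
      exact if_neg fun hm => hne (huniq2 i hm)
    rw [if_pos ⟨hu, hv⟩,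
      Finset.sum_eq_single i₀ hz (fun h => absurd (Finset.mem_univ _) h), if_pos hmemK]
  · rw [if_neg hc]
    refine (Finset.sum_eq_zero ?_).symm
    rintro ⟨k, b1, b2⟩ _
    rw [if_neg]
    intro hmem
    rw [mem_cov] at hmem
    obtain ⟨⟨m1, m2⟩, m3, m4⟩ := hmem
    apply hc
    constructor
    · cases b1 <;> simp only [cond] at m1 m3
      · exact fun h => Finset.disjoint_left.1 (hAB k) m3 (h ▸ m1)
      · exact fun h => Finset.disjoint_left.1 (hAB k) m1 (h ▸ m3)
    · cases b2 <;> simp only [cond] at m2 m4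
      · exact fun h => Finset.disjoint_left.1 (hCD k) m4 (h ▸ m2)
      · exact fun h => Finset.disjoint_left.1 (hCD k) m2 (h ▸ m4)

/-- inclusion-exclusion identity for the weak-product quadratic form -/
lemma sum_ne_split {α β : Type*} [Fintype α] [Fintype β] [DecidableEq α] [DecidableEq β]
    (x : α × β → ℚ) :
    ∑ pq : (α × β) × (α × β), (if pq.1.1 ≠ pq.2.1 ∧ pq.1.2 ≠ pq.2.2 then x pq.1 * x pq.2 else 0)
    = (∑ p, x p) ^ 2 - (∑ u, (∑ v, x (u, v)) ^ 2) - (∑ v, (∑ u, x (u, v)) ^ 2)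
        + ∑ p, x p ^ 2 := by
  have key : ∀ pq : (α × β) × (α × β),
      (if pq.1.1 ≠ pq.2.1 ∧ pq.1.2 ≠ pq.2.2 then x pq.1 * x pq.2 else 0)
      = x pq.1 * x pq.2 - (if pq.1.1 = pq.2.1 then x pq.1 * x pq.2 else 0)
        - (if pq.1.2 = pq.2.2 then x pq.1 * x pq.2 else 0)
        + (if pq.1.1 = pq.2.1 ∧ pq.1.2 = pq.2.2 then x pq.1 * x pq.2 else 0) := by
    intro pq
    by_cases h1 : pq.1.1 = pq.2.1 <;> by_cases h2 : pq.1.2 = pq.2.2 <;>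
      simp [h1, h2]
  rw [Finset.sum_congr rfl fun pq _ => key pq]
  rw [Finset.sum_add_distrib, Finset.sum_sub_distrib, Finset.sum_sub_distrib]
  have e1 : ∑ pq : (α × β) × (α × β), x pq.1 * x pq.2 = (∑ p, x p) ^ 2 := by
    rw [Fintype.sum_prod_type, sq, Finset.sum_mul_sum]
  have e2 : ∑ pq : (α × β) × (α × β), (if pq.1.1 = pq.2.1 then x pq.1 * x pq.2 else 0)
      = ∑ u, (∑ v, x (u, v)) ^ 2 := by
    rw [Fintype.sum_prod_type]
    simp only [Fintype.sum_prod_type]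
    refine Finset.sum_congr rfl fun u1 _ => ?_
    rw [sq, Finset.sum_mul_sum]
    refine Finset.sum_congr rfl fun v1 _ => ?_
    rw [Finset.sum_comm]
    simp [Finset.sum_ite_eq]
  have e3 : ∑ pq : (α × β) × (α × β), (if pq.1.2 = pq.2.2 then x pq.1 * x pq.2 else 0)
      = ∑ v, (∑ u, x (u, v)) ^ 2 := by
    rw [Fintype.sum_prod_type]
    simp only [Fintype.sum_prod_type]
    rw [Finset.sum_comm]
    refine Finset.sum_congr rfl fun v1 _ => ?_
    rw [sq, Finset.sum_mul_sum]
    refine Finset.sum_congr rfl fun u1 _ => ?_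
    simp [Finset.sum_ite_eq]
  have e4 : ∑ pq : (α × β) × (α × β),
      (if pq.1.1 = pq.2.1 ∧ pq.1.2 = pq.2.2 then x pq.1 * x pq.2 else 0)
      = ∑ p, x p ^ 2 := by
    rw [Fintype.sum_prod_type]
    simp only [Fintype.sum_prod_type]
    refine Finset.sum_congr rfl fun u1 _ => Finset.sum_congr rfl fun v1 _ => ?_
    rw [Finset.sum_comm]
    simp [ite_and, Finset.sum_ite_eq, sq]
  rw [e1, e2, e3, e4]

example : True := trivial

lemma key_bound {n m : ℕ} (hn : 2 ≤ n)
    (A B C D : Fin m → Finset (Fin n))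
    (hAB : ∀ k, Disjoint (A k) (B k)) (hCD : ∀ k, Disjoint (C k) (D k))
    (huniq : ∀ p : Sym2 (Fin n) × Sym2 (Fin n),
      p.1 ∈ (SimpleGraph.completeGraph (Fin n)).edgeSet → p.2 ∈ (SimpleGraph.completeGraph (Fin n)).edgeSet →
      ∃! k, p.1 ∈ bicliqueEdges (A k) (B k) ∧ p.2 ∈ bicliqueEdges (C k) (D k)) :
    (n - 1) ^ 2 + 1 ≤ 2 * m := by
  obtain ⟨l, rfl⟩ : ∃ l, n = l + 2 := ⟨n - 2, by omega⟩
  by_contra hlt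
  push_neg at hlt
  have hl1 : l + 2 - 1 = l + 1 := by omega
  rw [hl1] at hlt
  -- hlt : 2 * m < (l + 1) ^ 2 + 1
  -- the family of 2m + 2(l+1) linear functionals
  set Φ : (Fin (l + 2) × Fin (l + 2) → ℚ) →ₗ[ℚ]
      (((Fin m ⊕ Fin m) ⊕ (Fin (l + 1) ⊕ Fin (l + 1))) → ℚ) :=
    LinearMap.pi (Sum.elim
      (Sum.elim
        (fun k => (∑ p ∈ A k ×ˢ C k, LinearMap.proj p :
          (Fin (l + 2) × Fin (l + 2) → ℚ) →ₗ[ℚ] ℚ))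
        (fun k => (∑ p ∈ A k ×ˢ D k, LinearMap.proj p :
          (Fin (l + 2) × Fin (l + 2) → ℚ) →ₗ[ℚ] ℚ)))
      (Sum.elim
        (fun i => ((∑ v : Fin (l + 2), LinearMap.proj (i.succ, v))
          - ∑ v : Fin (l + 2), LinearMap.proj (0, v) :
          (Fin (l + 2) × Fin (l + 2) → ℚ) →ₗ[ℚ] ℚ))
        (fun i => ((∑ u : Fin (l + 2), LinearMap.proj (u, i.succ))
          - ∑ u : Fin (l + 2), LinearMap.proj (u, 0) :
          (Fin (l + 2) × Fin (l + 2) → ℚ) →ₗ[ℚ] ℚ)))) with hΦdef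
  have hni : ¬ Function.Injective Φ := by
    intro hinj
    have h1 := LinearMap.finrank_le_finrank_of_injective hinj
    rw [Module.finrank_pi, Module.finrank_pi] at h1
    simp only [Fintype.card_sum, Fintype.card_prod, Fintype.card_fin] at h1
    nlinarith [h1, hlt]
  rw [Function.not_injective_iff] at hni
  obtain ⟨y, z, hyz, hne⟩ := hni
  set x : Fin (l + 2) × Fin (l + 2) → ℚ := y - z with hxdef
  have hx0 : x ≠ 0 := sub_ne_zero.2 hne
  have hΦx : Φ x = 0 := by rw [hxdef, map_sub, hyz, sub_self]
  have happ : ∀ i, Φ x i = 0 := fun i => congrFun hΦx i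
  have hL : ∀ k, ∑ p ∈ A k ×ˢ C k, x p = 0 := by
    intro k
    have := happ (Sum.inl (Sum.inl k))
    simpa [hΦdef, LinearMap.pi_apply] using this
  have hL' : ∀ k, ∑ p ∈ A k ×ˢ D k, x p = 0 := by
    intro k
    have := happ (Sum.inl (Sum.inr k))
    simpa [hΦdef, LinearMap.pi_apply] using this
  have hRow : ∀ u : Fin (l + 2), ∑ v, x (u, v) = ∑ v, x (0, v) := by
    intro u
    rcases Fin.eq_zero_or_eq_succ u with h0 | ⟨i, rfl⟩
    · rw [h0]
    · have := happ (Sum.inr (Sum.inl i))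
      simp only [hΦdef, LinearMap.pi_apply, Sum.elim_inr, Sum.elim_inl,
        LinearMap.sub_apply, LinearMap.sum_apply, LinearMap.proj_apply] at this
      linarith [this]
  have hCol : ∀ v : Fin (l + 2), ∑ u, x (u, v) = ∑ u, x (u, 0) := by
    intro v
    rcases Fin.eq_zero_or_eq_succ v with h0 | ⟨i, rfl⟩
    · rw [h0]
    · have := happ (Sum.inr (Sum.inr i))
      simp only [hΦdef, LinearMap.pi_apply, Sum.elim_inr, Sum.elim_inl,
        LinearMap.sub_apply, LinearMap.sum_apply, LinearMap.proj_apply] at this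
      linarith [this]
  -- the quadratic form
  set S : ℚ := ∑ pq : (Fin (l + 2) × Fin (l + 2)) × (Fin (l + 2) × Fin (l + 2)),
      (if pq.1.1 ≠ pq.2.1 ∧ pq.1.2 ≠ pq.2.2 then x pq.1 * x pq.2 else 0) with hSdef
  -- identity 2 : S = 0
  have hS0 : S = 0 := by
    rw [hSdef]
    rw [Finset.sum_congr rfl fun pq _ => pointwise_cov A B C D hAB hCD huniq x pq]
    rw [Finset.sum_comm]
    refine Finset.sum_eq_zero ?_
    rintro ⟨k, b1, b2⟩ _
    rw [Finset.sum_ite_mem, Finset.univ_inter]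
    have hprod : ∀ (X Y : Finset (Fin (l + 2) × Fin (l + 2))),
        ∑ pq ∈ X ×ˢ Y, x pq.1 * x pq.2 = (∑ p ∈ X, x p) * (∑ q ∈ Y, x q) := by
      intro X Y
      rw [Finset.sum_product, Finset.sum_mul_sum]
    cases b1 <;> cases b2 <;>
      simp only [cov, cond] <;> rw [hprod]
    · rw [hL k, mul_zero]
    · rw [hL' k, mul_zero]
    · rw [hL' k, zero_mul]
    · rw [hL k, zero_mul]
  -- identity 1
  have hS1 : S = (∑ p, x p) ^ 2 - (∑ u, (∑ v, x (u, v)) ^ 2) - (∑ v, (∑ u, x (u, v)) ^ 2)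
      + ∑ p, x p ^ 2 := sum_ne_split x
  set r : ℚ := ∑ v, x (0, v) with hrdef
  set c : ℚ := ∑ u, x (u, 0) with hcdef
  have hT1 : (∑ p, x p) = ((l : ℚ) + 2) * r := by
    rw [Fintype.sum_prod_type]
    rw [Finset.sum_congr rfl fun u _ => hRow u]
    simp [mul_comm]
  have hT2 : (∑ p, x p) = ((l : ℚ) + 2) * c := by
    rw [Fintype.sum_prod_type, Finset.sum_comm]
    rw [Finset.sum_congr rfl fun v _ => hCol v]
    simp [mul_comm]
  have hrc : r = c := by
    have hne2 : ((l : ℚ) + 2) ≠ 0 := by positivity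
    have := hT1.symm.trans hT2
    exact mul_left_cancel₀ hne2 this
  have hR2 : (∑ u : Fin (l + 2), (∑ v, x (u, v)) ^ 2) = ((l : ℚ) + 2) * r ^ 2 := by
    rw [Finset.sum_congr rfl fun u _ => by rw [hRow u]]
    simp [mul_comm]
  have hC2 : (∑ v : Fin (l + 2), (∑ u, x (u, v)) ^ 2) = ((l : ℚ) + 2) * c ^ 2 := by
    rw [Finset.sum_congr rfl fun v _ => by rw [hCol v]]
    simp [mul_comm]
  have hPpos : 0 < ∑ p, x p ^ 2 := by
    obtain ⟨p, hp⟩ := Function.ne_iff.1 hx0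
    have hp' : x p ≠ 0 := by simpa using hp
    have h1 : x p ^ 2 ≤ ∑ p, x p ^ 2 :=
      Finset.single_le_sum (fun i _ => sq_nonneg (x i)) (Finset.mem_univ p)
    have h2 : 0 < x p ^ 2 := lt_of_le_of_ne (sq_nonneg _) (Ne.symm (pow_ne_zero 2 hp'))
    linarith
  rw [hS0, hT1, hR2, hC2, hrc] at hS1
  have hl2 : (0 : ℚ) ≤ (l : ℚ) := by positivity
  nlinarith [hS1, hPpos, sq_nonneg c, mul_nonneg hl2 (sq_nonneg c),
    mul_nonneg (mul_nonneg hl2 hl2) (sq_nonneg c)]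

def quadEquiv (n : ℕ) : Fin ((n * n) * (n * n)) ≃ (Fin n × Fin n) × (Fin n × Fin n) :=
  finProdFinEquiv.symm.trans (Equiv.prodCongr finProdFinEquiv.symm finProdFinEquiv.symm)

def qAct {n : ℕ} (q : (Fin n × Fin n) × (Fin n × Fin n)) : Prop :=
  q.1.1 < q.1.2 ∧ q.2.1 < q.2.2

instance {n : ℕ} (q : (Fin n × Fin n) × (Fin n × Fin n)) : Decidable (qAct q) := by
  unfold qAct; infer_instance

def qA {n : ℕ} (k : Fin ((n * n) * (n * n))) : Finset (Fin n) :=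
  if qAct (quadEquiv n k) then {(quadEquiv n k).1.1} else ∅

def qB {n : ℕ} (k : Fin ((n * n) * (n * n))) : Finset (Fin n) :=
  if qAct (quadEquiv n k) then {(quadEquiv n k).1.2} else ∅

def qC {n : ℕ} (k : Fin ((n * n) * (n * n))) : Finset (Fin n) :=
  if qAct (quadEquiv n k) then {(quadEquiv n k).2.1} else ∅

def qD {n : ℕ} (k : Fin ((n * n) * (n * n))) : Finset (Fin n) :=
  if qAct (quadEquiv n k) then {(quadEquiv n k).2.2} else ∅

lemma edge_repr {n : ℕ} : ∀ e : Sym2 (Fin n), ¬ e.IsDiag → ∃ a b : Fin n, a < b ∧ e = s(a, b) := by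
  intro e
  induction e using Sym2.ind with
  | _ u v =>
    intro hd
    have huv : u ≠ v := by simpa using hd
    rcases lt_or_gt_of_ne huv with h | h
    · exact ⟨u, v, h, rfl⟩
    · exact ⟨v, u, h, Sym2.eq_swap⟩

lemma ordered_repr_unique {n : ℕ} {a b a' b' : Fin n} (hab : a < b) (hab' : a' < b')
    (h : s(a, b) = s(a', b')) : a = a' ∧ b = b' := by
  rw [Sym2.eq_iff] at h
  rcases h with ⟨rfl, rfl⟩ | ⟨rfl, rfl⟩
  · exact ⟨rfl, rfl⟩
  · exact absurd (hab.trans hab') (lt_irrefl _)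

lemma gset_nonempty (n : ℕ) :
    {m | ∃ A B : Fin m → Finset (Fin n), ∃ C D : Fin m → Finset (Fin n),
      (∀ k, Disjoint (A k) (B k)) ∧ (∀ k, Disjoint (C k) (D k)) ∧
      (∀ k, bicliqueEdges (A k) (B k) ⊆ (SimpleGraph.completeGraph (Fin n)).edgeSet) ∧
      (∀ k, bicliqueEdges (C k) (D k) ⊆ (SimpleGraph.completeGraph (Fin n)).edgeSet) ∧
      ∀ p : Sym2 (Fin n) × Sym2 (Fin n), p.1 ∈ (SimpleGraph.completeGraph (Fin n)).edgeSet →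
        p.2 ∈ (SimpleGraph.completeGraph (Fin n)).edgeSet →
        ∃! k, p.1 ∈ bicliqueEdges (A k) (B k) ∧ p.2 ∈ bicliqueEdges (C k) (D k)}.Nonempty := by
  refine ⟨(n * n) * (n * n), qA, qB, qC, qD, ?_, ?_, ?_, ?_, ?_⟩
  · intro k
    by_cases h : qAct (quadEquiv n k)
    · simp only [qA, qB, if_pos h]
      exact Finset.disjoint_singleton.2 (ne_of_lt h.1)
    · simp [qA, qB, if_neg h]
  · intro k
    by_cases h : qAct (quadEquiv n k)
    · simp only [qC, qD, if_pos h]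
      exact Finset.disjoint_singleton.2 (ne_of_lt h.2)
    · simp [qC, qD, if_neg h]
  · rintro k e ⟨a, ha, b, hb, rfl⟩
    by_cases h : qAct (quadEquiv n k)
    · simp only [qA, qB, if_pos h, Finset.mem_singleton] at ha hb
      subst ha; subst hb
      simpa [SimpleGraph.completeGraph] using ne_of_lt h.1
    · simp [qA, if_neg h] at ha
  · rintro k e ⟨a, ha, b, hb, rfl⟩
    by_cases h : qAct (quadEquiv n k)
    · simp only [qC, qD, if_pos h, Finset.mem_singleton] at ha hb
      subst ha; subst hb
      simpa [SimpleGraph.completeGraph] using ne_of_lt h.2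
    · simp [qC, if_neg h] at ha
  · rintro ⟨e, f⟩ he hf
    have hdiag : ∀ g : Sym2 (Fin n), g ∈ (SimpleGraph.completeGraph (Fin n)).edgeSet → ¬ g.IsDiag := by
      intro g
      induction g using Sym2.ind with
      | _ u v =>
        intro hg
        simp only [SimpleGraph.mem_edgeSet] at hg
        simpa using hg
    have hde : ¬ e.IsDiag := hdiag e he
    have hdf : ¬ f.IsDiag := hdiag f hf
    obtain ⟨a, b, hab, rfl⟩ := edge_repr e hde
    obtain ⟨c, d, hcd, rfl⟩ := edge_repr f hdf
    set k₀ : Fin ((n * n) * (n * n)) := (quadEquiv n).symm ((a, b), (c, d)) with hk₀def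
    have hq : quadEquiv n k₀ = ((a, b), (c, d)) := (quadEquiv n).apply_symm_apply _
    have hact' : qAct (((a, b), (c, d)) : (Fin n × Fin n) × (Fin n × Fin n)) := ⟨hab, hcd⟩
    have hact : qAct (quadEquiv n k₀) := by rw [hq]; exact hact'
    refine ⟨k₀, ⟨⟨a, ?_, b, ?_, ?_⟩, ⟨c, ?_, d, ?_, ?_⟩⟩, ?_⟩
    · simp [qA, hq, hact']
    · simp [qB, hq, hact']
    · rfl
    · simp [qC, hq, hact']
    · simp [qD, hq, hact']
    · rfl
    · rintro k' ⟨⟨a', ha', b', hb', heq⟩, ⟨c', hc', d', hd', heq2⟩⟩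
      by_cases h : qAct (quadEquiv n k')
      · simp only [qA, qB, qC, qD, if_pos h, Finset.mem_singleton] at ha' hb' hc' hd'
        subst ha'; subst hb'; subst hc'; subst hd'
        obtain ⟨e1, e2⟩ := ordered_repr_unique hab h.1 heq
        obtain ⟨e3, e4⟩ := ordered_repr_unique hcd h.2 heq2
        apply (quadEquiv n).injective
        rw [hq]
        rw [Prod.ext_iff, Prod.ext_iff, Prod.ext_iff]
        exact ⟨⟨e1.symm, e2.symm⟩, e3.symm, e4.symm⟩
      · simp [qA, if_neg h] at ha'

theorem stmt17 (n : ℕ) (hn : 2 ≤ n) :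
    ⌈(((n : ℚ) - 1) ^ 2 + 1) / 2⌉ ≤ (gn n : ℤ) := by
  have hne := gset_nonempty n
  have hmem := Nat.sInf_mem hne
  simp only [Set.mem_setOf_eq] at hmem
  obtain ⟨A, B, C, D, h1, h2, _, _, h5⟩ := hmem
  have hkey := key_bound hn A B C D h1 h2 h5
  have hgn : gn n = sInf {m | ∃ A B : Fin m → Finset (Fin n), ∃ C D : Fin m → Finset (Fin n),
      (∀ k, Disjoint (A k) (B k)) ∧ (∀ k, Disjoint (C k) (D k)) ∧
      (∀ k, bicliqueEdges (A k) (B k) ⊆ (SimpleGraph.completeGraph (Fin n)).edgeSet) ∧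
      (∀ k, bicliqueEdges (C k) (D k) ⊆ (SimpleGraph.completeGraph (Fin n)).edgeSet) ∧
      ∀ p : Sym2 (Fin n) × Sym2 (Fin n), p.1 ∈ (SimpleGraph.completeGraph (Fin n)).edgeSet →
        p.2 ∈ (SimpleGraph.completeGraph (Fin n)).edgeSet →
        ∃! k, p.1 ∈ bicliqueEdges (A k) (B k) ∧ p.2 ∈ bicliqueEdges (C k) (D k)} := rfl
  rw [← hgn] at hkey
  -- hkey : (n - 1) ^ 2 + 1 ≤ 2 * gn n
  have h1n : (1 : ℕ) ≤ n := le_trans one_le_two hn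
  have hc : ((n - 1 : ℕ) : ℚ) = (n : ℚ) - 1 := by
    rw [Nat.cast_sub h1n]; norm_num
  have h' : ((n : ℚ) - 1) ^ 2 + 1 ≤ 2 * (gn n : ℚ) := by
    rw [← hc]
    exact_mod_cast hkey
  rw [Int.ceil_le]
  push_cast
  rw [div_le_iff₀ (by norm_num : (0 : ℚ) < 2)]
  linarith
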